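/- Let Q be a compact convex set with (cos α)·D_O ⊆ Q ⊆ D_O, α ∈ (0, π/22). Let p, q ∈ ℝ², u a direction, such that both disks D_{pq}(u−5α) and D_{pq}(u+5α) (centered on the rays from p in directions u−5α and u+5α and passing through p and q) exist. Then the homothetic copy Q_{pq}(u) of Q touching p and q with center on u[p] also exists; i.e., q does not lie in the open halfplane bounded by a supporting line of Q_p(u) at p and disjoint from Q_p(u). -/

import Mathlib

open Real
open scoped Pointwise

/-- Clockwise rotation of the direction `u ∈ ℂ ≅ ℝ²` by the angle `θ`. -/
noncomputable def rotCW (θ : ℝ) (u : ℂ) : ℂ := Complex.exp (-(θ : ℂ) * Complex.I) * u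

/-- The homothetic copy of `Q ⊆ ℂ ≅ ℝ²` with center placed at `z` and scaling factor `lam`
(`Q` is regarded as centered at the origin). -/
noncomputable def homothet (Q : Set ℂ) (z : ℂ) (lam : ℝ) : Set ℂ := (fun w => z + (lam : ℂ) * w) '' Q

/-- The planar cross product: positive iff `b` lies (strictly) counterclockwise of `a`,
i.e. iff `b` is to the left of the directed line along `a`. -/
noncomputable def cross2 (a b : ℂ) : ℝ := a.re * b.im - a.im * b.re

lemma normsq_eq (z : ℂ) : ‖z‖ ^ 2 = z.re ^ 2 + z.im ^ 2 := by
  rw [Complex.sq_norm, Complex.normSq_apply]; ring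

lemma rotCW_eq (θ : ℝ) (u : ℂ) :
    rotCW θ u = ((Real.cos θ : ℂ) - (Real.sin θ : ℂ) * Complex.I) * u := by
  have h : -(θ : ℂ) * Complex.I = ((-θ : ℝ) : ℂ) * Complex.I := by push_cast; ring
  rw [rotCW, h, Complex.exp_mul_I, ← Complex.ofReal_cos, ← Complex.ofReal_sin,
    Real.cos_neg, Real.sin_neg]
  push_cast; ring

lemma rotCW_re (θ : ℝ) (u : ℂ) :
    (rotCW θ u).re = Real.cos θ * u.re + Real.sin θ * u.im := by
  rw [rotCW_eq]
  simp [Complex.mul_re, Complex.sub_re, Complex.sub_im, Complex.cos_ofReal_re,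
    Complex.sin_ofReal_re]
  try ring

lemma rotCW_im (θ : ℝ) (u : ℂ) :
    (rotCW θ u).im = Real.cos θ * u.im - Real.sin θ * u.re := by
  rw [rotCW_eq]
  simp [Complex.mul_im, Complex.sub_re, Complex.sub_im, Complex.cos_ofReal_re,
    Complex.sin_ofReal_re]
  try ring

/-- Pure real arithmetic: positivity of the inner product with the disk center direction. -/
lemma key_arith (r wre wim vre vim : ℝ) (hr : 0 < r) (hw : 0 < wre ^ 2 + wim ^ 2)
    (hv : vre ^ 2 + vim ^ 2 = 1)
    (hcoords : (wre - r * vre) ^ 2 + (wim - r * vim) ^ 2 = r ^ 2) :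
    0 < wre * vre + wim * vim := by
  have hip : 2 * r * (wre * vre + wim * vim) = wre ^ 2 + wim ^ 2 := by
    linear_combination r ^ 2 * hv - hcoords
  nlinarith [hip, hw, hr]

/-- Pure real arithmetic: from the two rotated inner products being positive we get
`0 < d` and `sin α · ‖w‖ ≤ d`. -/
lemma arith_A (s ca s5 c5 d c W : ℝ) (hs : 0 < s) (hca : 0 < ca) (hs5 : 0 < s5)
    (hc5 : 0 < c5) (hsin4 : c5 * s ≤ s5 * ca)
    (h1 : 0 < c5 * d + s5 * c) (h2 : 0 < c5 * d - s5 * c)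
    (hW : 0 ≤ W) (hpy : s ^ 2 + ca ^ 2 = 1) (hWsq : W ^ 2 = d ^ 2 + c ^ 2) :
    0 < d ∧ s * W ≤ d := by
  have hd : 0 < d := by nlinarith
  refine ⟨hd, ?_⟩
  have e1 : s5 * (s * c) < s5 * (ca * d) := by
    calc s5 * (s * c) = s * (s5 * c) := by ring
      _ < s * (c5 * d) := by
          apply mul_lt_mul_of_pos_left _ hs
          linarith
      _ = (c5 * s) * d := by ring
      _ ≤ (s5 * ca) * d := mul_le_mul_of_nonneg_right hsin4 hd.le
      _ = s5 * (ca * d) := by ring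
  have e2 : s5 * (s * (-c)) < s5 * (ca * d) := by
    calc s5 * (s * (-c)) = s * (s5 * (-c)) := by ring
      _ < s * (c5 * d) := by
          apply mul_lt_mul_of_pos_left _ hs
          linarith
      _ = (c5 * s) * d := by ring
      _ ≤ (s5 * ca) * d := mul_le_mul_of_nonneg_right hsin4 hd.le
      _ = s5 * (ca * d) := by ring
  have hc1 : s * c < ca * d := lt_of_mul_lt_mul_left e1 hs5.le
  have hc2 : -(ca * d) < s * c := by
    have := lt_of_mul_lt_mul_left e2 hs5.le
    linarith
  have hsq : (s * c) ^ 2 < (ca * d) ^ 2 := sq_lt_sq' hc2 hc1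
  have hfinal : s ^ 2 * W ^ 2 ≤ d ^ 2 := by nlinarith [hsq, hWsq, hpy, sq_nonneg s, sq_nonneg d]
  nlinarith [hfinal, mul_nonneg hs.le hW, hd]

/-- Pure real arithmetic: the squared distance estimate at the time `t0 = d / s²`. -/
lemma arith_B (s ca d W t0 : ℝ) (hs : 0 < s) (hpy : s ^ 2 + ca ^ 2 = 1)
    (hd : 0 < d) (hW : 0 ≤ W) (hsW : s * W ≤ d) (hT : s ^ 2 * t0 = d) :
    W ^ 2 - 2 * t0 * d + t0 ^ 2 ≤ (t0 * ca) ^ 2 := by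
  have hs2 : (0 : ℝ) < s ^ 2 := by positivity
  have hsq : s ^ 2 * W ^ 2 ≤ d ^ 2 := by nlinarith [mul_nonneg hs.le hW, hsW, hd]
  have hd2 : d ^ 2 = s ^ 4 * t0 ^ 2 := by rw [← hT]; ring
  have hkey : W ^ 2 ≤ s ^ 2 * t0 ^ 2 := by nlinarith [hsq, hd2, hs2]
  have hTd : t0 * d = s ^ 2 * t0 ^ 2 := by rw [← hT]; ring
  have hca2 : (t0 * ca) ^ 2 = t0 ^ 2 - s ^ 2 * t0 ^ 2 := by
    have h : ca ^ 2 = 1 - s ^ 2 := by linarith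
    rw [mul_pow, h]; ring
  linarith [hkey, hTd, hca2]

lemma le_of_sq_le_sq' (a b : ℝ) (ha : 0 ≤ a) (hb : 0 ≤ b) (h : a ^ 2 ≤ b ^ 2) : a ≤ b := by
  nlinarith

lemma mem_frontier_homothet {Q : Set ℂ} (hQconv : Convex ℝ Q) (hQ0 : Q ∈ nhds (0 : ℂ))
    (z x : ℂ) {lam : ℝ} (hl : 0 < lam) :
    x ∈ frontier (homothet Q z lam) ↔ gauge Q (x - z) = lam := by
  have hl' : (lam : ℂ) ≠ 0 := by exact_mod_cast hl.ne'
  let h : ℂ ≃ₜ ℂ := (Homeomorph.mulLeft₀ (lam : ℂ) hl').trans (Homeomorph.addLeft z)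
  have himg : homothet Q z lam = h '' Q := by
    ext y
    simp [homothet, h, Homeomorph.trans, Set.mem_image]
    exact Iff.rfl
  have hfr : frontier (homothet Q z lam) = h '' frontier Q := by
    rw [himg, h.image_frontier]
  have hmem : x ∈ h '' frontier Q ↔ (lam⁻¹ : ℝ) • (x - z) ∈ frontier Q := by
    constructor
    · rintro ⟨y, hy, rfl⟩
      have hyy : h y = z + lam * y := rfl
      rw [hyy]
      have : (lam⁻¹ : ℝ) • (z + (lam : ℂ) * y - z) = y := by
        rw [Complex.real_smul]
        push_cast
        field_simp
        ring
      rwa [this]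
    · intro hx
      refine ⟨(lam⁻¹ : ℝ) • (x - z), hx, ?_⟩
      show z + (lam : ℂ) * ((lam⁻¹ : ℝ) • (x - z)) = x
      rw [Complex.real_smul]
      push_cast
      field_simp
      ring
  rw [hfr, hmem, ← gauge_eq_one_iff_mem_frontier hQconv hQ0,
    gauge_smul_of_nonneg (inv_nonneg.2 hl.le), smul_eq_mul, inv_mul_eq_one₀ hl.ne']
  exact eq_comm

/-- Existence step (i) in the proof of Theorem 1.1(i): let `Q` be compact convex with
`(cos α) • D_O ⊆ Q ⊆ D_O`, `α ∈ (0, π/22)`. If both Euclidean disks `D_{pq}(u−5α)` and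
`D_{pq}(u+5α)` (through `p` and `q`, centered on the rays from `p` in the directions obtained
from `u` by rotating by `∓5α`) exist, then the homothetic copy `Q_{pq}(u)` of `Q` touching `p`
and `q` with center on the ray `u[p]` also exists. -/
theorem stmt_13 (α : ℝ) (hα : α ∈ Set.Ioo 0 (π / 22))
    (Q : Set ℂ) (hQc : IsCompact Q) (hQconv : Convex ℝ Q)
    (hsub : Real.cos α • Metric.closedBall (0 : ℂ) 1 ⊆ Q)
    (hsup : Q ⊆ Metric.closedBall (0 : ℂ) 1)
    (p q : ℂ) (hpq : p ≠ q) (u : ℂ) (hu : ‖u‖ = 1)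
    (r₁ r₂ : ℝ) (hr₁ : 0 < r₁) (hr₂ : 0 < r₂)
    (hD₁ : dist q (p + r₁ • rotCW (-(5 * α)) u) = r₁)
    (hD₂ : dist q (p + r₂ • rotCW (5 * α) u) = r₂) :
    ∃ t lam : ℝ, 0 < t ∧ 0 < lam ∧
      p ∈ frontier (homothet Q (p + t • u) lam) ∧
      q ∈ frontier (homothet Q (p + t • u) lam) := by
  obtain ⟨hα0, hα1⟩ := hα
  have hπ : (0:ℝ) < π := Real.pi_pos
  have hca : 0 < Real.cos α := by
    apply Real.cos_pos_of_mem_Ioo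
    constructor <;> linarith
  -- Q is a neighborhood of 0
  have hball : Metric.closedBall (0 : ℂ) (Real.cos α) ⊆ Q := by
    intro x hx
    apply hsub
    rw [Set.mem_smul_set]
    refine ⟨(Real.cos α)⁻¹ • x, ?_, ?_⟩
    · rw [Metric.mem_closedBall, dist_zero_right, norm_smul, norm_inv, Real.norm_eq_abs,
        abs_of_pos hca]
      rw [Metric.mem_closedBall, dist_zero_right] at hx
      rw [inv_mul_le_iff₀ hca, mul_one]
      exact hx
    · rw [smul_smul, mul_inv_cancel₀ hca.ne', one_smul]
  have hQ0 : Q ∈ nhds (0 : ℂ) :=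
    Filter.mem_of_superset (Metric.closedBall_mem_nhds 0 hca) hball
  have habs : Absorbent ℝ Q := absorbent_nhds_zero hQ0
  -- gauge bounds
  have hg_le : ∀ x : ℂ, gauge Q x ≤ ‖x‖ / Real.cos α := by
    intro x
    have := gauge_mono (absorbent_nhds_zero (Metric.closedBall_mem_nhds 0 hca)) hball x
    rwa [gauge_closedBall hca.le] at this
  have hg_ge : ∀ x : ℂ, ‖x‖ ≤ gauge Q x := by
    intro x
    have := le_gauge_of_subset_closedBall habs zero_le_one hsup (x := x)
    simpa using this
  set γ : ℝ := gauge Q (-u) with hγdef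
  have hγ1 : 1 ≤ γ := by
    have := hg_ge (-u)
    rwa [norm_neg, hu] at this
  -- coordinates
  set w : ℂ := q - p with hwdef
  have hw : w ≠ 0 := sub_ne_zero.2 (Ne.symm hpq)
  have hu2 : u.re ^ 2 + u.im ^ 2 = 1 := by
    have h := normsq_eq u
    rw [hu] at h
    linarith [h]
  have hW2 : ‖w‖ ^ 2 = w.re ^ 2 + w.im ^ 2 := normsq_eq w
  have hWpos : 0 < ‖w‖ := norm_pos_iff.2 hw
  have hWsqpos : 0 < w.re ^ 2 + w.im ^ 2 := by rw [← hW2]; positivity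
  have hs : 0 < Real.sin α := Real.sin_pos_of_pos_of_lt_pi hα0 (by linarith)
  have hs5 : 0 < Real.sin (5 * α) :=
    Real.sin_pos_of_pos_of_lt_pi (by linarith) (by linarith)
  have hc5 : 0 < Real.cos (5 * α) := by
    apply Real.cos_pos_of_mem_Ioo
    constructor <;> linarith
  have hpyth : Real.sin α ^ 2 + Real.cos α ^ 2 = 1 := Real.sin_sq_add_cos_sq α
  have hsin4 : Real.cos (5 * α) * Real.sin α ≤ Real.sin (5 * α) * Real.cos α := by
    have h4 : Real.sin (5 * α - α)
        = Real.sin (5 * α) * Real.cos α - Real.cos (5 * α) * Real.sin α :=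
      Real.sin_sub (5 * α) α
    have hpos : 0 < Real.sin (5 * α - α) :=
      Real.sin_pos_of_pos_of_lt_pi (by linarith) (by linarith)
    rw [h4] at hpos
    linarith
  set d : ℝ := w.re * u.re + w.im * u.im with hd_def
  set c : ℝ := w.re * u.im - w.im * u.re with hc_def
  -- extract the two inner-product positivity facts from the disk conditions
  have key : ∀ (r : ℝ) (θ : ℝ), 0 < r → dist q (p + r • rotCW θ u) = r →
      0 < Real.cos θ * d + Real.sin θ * c := by
    intro r θ hr hdist
    set v : ℂ := rotCW θ u with hv
    have hvre : v.re = Real.cos θ * u.re + Real.sin θ * u.im := rotCW_re θ u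
    have hvim : v.im = Real.cos θ * u.im - Real.sin θ * u.re := rotCW_im θ u
    have hsq : ‖q - (p + r • v)‖ ^ 2 = r ^ 2 := by
      rw [← dist_eq_norm, hdist]
    have hcoords : (w.re - r * v.re) ^ 2 + (w.im - r * v.im) ^ 2 = r ^ 2 := by
      have h1 : q - (p + r • v) = w - r • v := by rw [hwdef]; ring
      rw [h1, normsq_eq] at hsq
      have hre : (w - r • v).re = w.re - r * v.re := by
        simp [Complex.sub_re, Complex.real_smul, Complex.mul_re]
      have him : (w - r • v).im = w.im - r * v.im := by
        simp [Complex.sub_im, Complex.real_smul, Complex.mul_im]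
      rw [hre, him] at hsq
      exact hsq
    have hvnorm : v.re ^ 2 + v.im ^ 2 = 1 := by
      rw [hvre, hvim]
      have hpy := Real.sin_sq_add_cos_sq θ
      linear_combination (u.re ^ 2 + u.im ^ 2) * hpy + hu2
    have hip := key_arith r w.re w.im v.re v.im hr hWsqpos hvnorm hcoords
    have hrw : w.re * v.re + w.im * v.im = Real.cos θ * d + Real.sin θ * c := by
      rw [hvre, hvim, hd_def, hc_def]; ring
    rwa [hrw] at hip
  have h1 : 0 < Real.cos (5 * α) * d + Real.sin (5 * α) * c := key r₂ (5 * α) hr₂ hD₂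
  have h2 : 0 < Real.cos (5 * α) * d - Real.sin (5 * α) * c := by
    have h := key r₁ (-(5 * α)) hr₁ hD₁
    rw [Real.cos_neg, Real.sin_neg] at h
    linarith
  have hWsq : ‖w‖ ^ 2 = d ^ 2 + c ^ 2 := by
    rw [hW2, hd_def, hc_def]
    linear_combination (-(w.re ^ 2 + w.im ^ 2)) * hu2
  obtain ⟨hd, hsW⟩ := arith_A (Real.sin α) (Real.cos α) (Real.sin (5 * α))
    (Real.cos (5 * α)) d c ‖w‖ hs hca hs5 hc5 hsin4 h1 h2 (norm_nonneg w) hpyth hWsq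
  -- the target time t₀
  set t₀ : ℝ := d / Real.sin α ^ 2 with ht₀def
  have ht₀ : 0 < t₀ := div_pos hd (by positivity)
  have hT : Real.sin α ^ 2 * t₀ = d := by
    rw [ht₀def]; field_simp
  have hnormsq : ‖w - t₀ • u‖ ^ 2 = ‖w‖ ^ 2 - 2 * t₀ * d + t₀ ^ 2 := by
    have hre : (w - t₀ • u).re = w.re - t₀ * u.re := by
      simp [Complex.sub_re, Complex.real_smul, Complex.mul_re]
    have him : (w - t₀ • u).im = w.im - t₀ * u.im := by
      simp [Complex.sub_im, Complex.real_smul, Complex.mul_im]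
    rw [normsq_eq, hre, him, hW2, hd_def]
    linear_combination t₀ ^ 2 * hu2
  have hnorm : ‖w - t₀ • u‖ ≤ t₀ * Real.cos α := by
    apply le_of_sq_le_sq' _ _ (norm_nonneg _) (by positivity)
    rw [hnormsq]
    exact arith_B (Real.sin α) (Real.cos α) d ‖w‖ t₀ hs hpyth hd (norm_nonneg w) hsW hT
  -- the continuous function
  set F : ℝ → ℝ := fun t => gauge Q (w - t • u) - t * γ with hFdef
  have hFcont : Continuous F := by
    apply Continuous.sub
    · exact (continuous_gauge hQconv hQ0).comp
        (continuous_const.sub (continuous_id.smul continuous_const))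
    · exact continuous_id.mul continuous_const
  have hF0 : 0 < F 0 := by
    have h0 : F 0 = gauge Q w := by simp [hFdef]
    rw [h0]
    exact lt_of_lt_of_le hWpos (hg_ge w)
  have hFt₀ : F t₀ ≤ 0 := by
    have h1' : gauge Q (w - t₀ • u) ≤ ‖w - t₀ • u‖ / Real.cos α := hg_le _
    have h2' : ‖w - t₀ • u‖ / Real.cos α ≤ t₀ := by
      rw [div_le_iff₀ hca]
      linarith [hnorm]
    have h3' : t₀ ≤ t₀ * γ := le_mul_of_one_le_right ht₀.le hγ1
    simp only [hFdef]
    linarith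
  -- IVT
  have hIVT : (0 : ℝ) ∈ F '' Set.Icc 0 t₀ :=
    intermediate_value_Icc' ht₀.le hFcont.continuousOn ⟨hFt₀, hF0.le⟩
  obtain ⟨t, htmem, htF⟩ := hIVT
  have ht : 0 < t := by
    rcases lt_or_eq_of_le htmem.1 with h | h
    · exact h
    · exfalso; rw [← h] at htF; linarith
  have hγpos : 0 < γ := lt_of_lt_of_le one_pos hγ1
  refine ⟨t, t * γ, ht, mul_pos ht hγpos, ?_, ?_⟩
  · rw [mem_frontier_homothet hQconv hQ0 _ _ (mul_pos ht hγpos)]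
    have hp : p - (p + t • u) = t • (-u) := by
      rw [smul_neg]; ring
    rw [hp, gauge_smul_of_nonneg ht.le, smul_eq_mul, hγdef]
  · rw [mem_frontier_homothet hQconv hQ0 _ _ (mul_pos ht hγpos)]
    have hq : q - (p + t • u) = w - t • u := by
      rw [hwdef]; ring
    rw [hq]
    have h := htF
    simp only [hFdef] at h
    linarith
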